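/- Let π be a permutation of {1,…,n} avoiding the pattern 132 and having exactly three left-to-right minima, with values m1 > m2 > m3 occurring at positions p1 < p2 < p3. Then π avoids the pattern 4231 if and only if m1 = m2 + 1 or p3 = p2 + 1. -/
import Mathlib


/-- A Dyck word of semilength `n`, as a list of booleans read left to right,
where `true` is an up-step `U` and `false` is a down-step `D`:
exactly `n` of each letter, and every prefix has at least as many `U`'s as `D`'s. -/
def IsDyckWord (n : ℕ) (w : List Bool) : Prop :=
  w.count true = n ∧ w.count false = n ∧
    ∀ k : ℕ, (w.take k).count false ≤ (w.take k).count true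

/-- The number of peaks of a word: positions where a `U` is immediately followed by a `D`. -/
def numPeaks (w : List Bool) : ℕ := (w.zip w.tail).count (true, false)

/-- The word `U^a D^b`. -/
def upDown (a b : ℕ) : List Bool :=
  List.replicate a true ++ List.replicate b false

/-- A permutation `π` of `{0, …, n-1}` contains the pattern `σ` (a permutation of
`{0, …, m-1}`) if some subsequence of values of `π` is in the same relative order as `σ`. -/
def ContainsPattern {n m : ℕ} (π : Equiv.Perm (Fin n)) (σ : Equiv.Perm (Fin m)) : Prop :=
  ∃ f : Fin m → Fin n, StrictMono f ∧ ∀ a b : Fin m, π (f a) < π (f b) ↔ σ a < σ b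

/-- A permutation avoids a pattern if it does not contain it. -/
def AvoidsPattern {n m : ℕ} (π : Equiv.Perm (Fin n)) (σ : Equiv.Perm (Fin m)) : Prop :=
  ¬ ContainsPattern π σ

/-- The pattern 132 (0-indexed: 021). -/
def pat132 : Equiv.Perm (Fin 3) where
  toFun := ![0, 2, 1]
  invFun := ![0, 2, 1]
  left_inv := by intro x; fin_cases x <;> rfl
  right_inv := by intro x; fin_cases x <;> rfl

/-- The pattern 321 (0-indexed: 210). -/
def pat321 : Equiv.Perm (Fin 3) where
  toFun := ![2, 1, 0]
  invFun := ![2, 1, 0]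
  left_inv := by intro x; fin_cases x <;> rfl
  right_inv := by intro x; fin_cases x <;> rfl

/-- The pattern 4321 (0-indexed: 3210). -/
def pat4321 : Equiv.Perm (Fin 4) where
  toFun := ![3, 2, 1, 0]
  invFun := ![3, 2, 1, 0]
  left_inv := by intro x; fin_cases x <;> rfl
  right_inv := by intro x; fin_cases x <;> rfl

/-- The pattern 4231 (0-indexed: 3120). -/
def pat4231 : Equiv.Perm (Fin 4) where
  toFun := ![3, 1, 2, 0]
  invFun := ![3, 1, 2, 0]
  left_inv := by intro x; fin_cases x <;> rfl
  right_inv := by intro x; fin_cases x <;> rfl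

/-- The strictly decreasing pattern `(k+1)k⋯21` of length `k+1`. -/
def patDesc (k : ℕ) : Equiv.Perm (Fin (k+1)) where
  toFun := Fin.rev
  invFun := Fin.rev
  left_inv := Fin.rev_rev
  right_inv := Fin.rev_rev

/-- `w` has exactly three peaks and, in its (unique) decomposition
`U^{a₁}D^{b₁}U^{a₂}D^{b₂}U^{a₃}D^{b₃}` with all exponents positive,
`a₂ = 1` or `b₂ = 1`. -/
def ThreePeakMiddleOne (w : List Bool) : Prop :=
  numPeaks w = 3 ∧ ∃ a₁ b₁ a₂ b₂ a₃ b₃ : ℕ,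
    0 < a₁ ∧ 0 < b₁ ∧ 0 < a₂ ∧ 0 < b₂ ∧ 0 < a₃ ∧ 0 < b₃ ∧
    w = upDown a₁ b₁ ++ upDown a₂ b₂ ++ upDown a₃ b₃ ∧ (a₂ = 1 ∨ b₂ = 1)

/-- `i` is (the position of) a left-to-right minimum of `π`. -/
def IsLtrMin {n : ℕ} (π : Equiv.Perm (Fin n)) (i : Fin n) : Prop :=
  ∀ j : Fin n, j < i → π i < π j

lemma contains132_of {n : ℕ} (π : Equiv.Perm (Fin n)) (a b c : Fin n)
    (hab : a < b) (hbc : b < c) (h1 : π a < π c) (h2 : π c < π b) :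
    ContainsPattern π pat132 := by
  have n1 : (π a : ℕ) < (π c : ℕ) := h1
  have n2 : (π c : ℕ) < (π b : ℕ) := h2
  have na : (a : ℕ) < (b : ℕ) := hab
  have nb : (b : ℕ) < (c : ℕ) := hbc
  have henum : ∀ u : Fin 3, u = 0 ∨ u = 1 ∨ u = 2 := by decide
  refine ⟨![a, b, c], ?_, ?_⟩
  · intro x y hxy
    rcases henum x with hx | hx | hx <;> rcases henum y with hy | hy | hy <;>
      subst hx <;> subst hy <;>
      simp only [Matrix.cons_val_zero, Matrix.cons_val_one, Matrix.head_cons,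
        Matrix.cons_val_two, Matrix.tail_cons] <;>
      first
        | exact absurd hxy (by decide)
        | exact Fin.lt_def.mpr (by omega)
  · intro x y
    rcases henum x with hx | hx | hx <;> rcases henum y with hy | hy | hy <;>
      subst hx <;> subst hy <;>
      simp only [Matrix.cons_val_zero, Matrix.cons_val_one, Matrix.head_cons,
        Matrix.cons_val_two, Matrix.tail_cons] <;>
      (constructor <;> intro h) <;>
      first
        | decide
        | exact absurd h (by decide)
        | exact Fin.lt_def.mpr (by omega)
        | (rw [Fin.lt_def] at h; omega)

lemma contains4231_of {n : ℕ} (π : Equiv.Perm (Fin n)) (i j k l : Fin n)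
    (hij : i < j) (hjk : j < k) (hkl : k < l)
    (h1 : π l < π j) (h2 : π j < π k) (h3 : π k < π i) :
    ContainsPattern π pat4231 := by
  have n1 : (π l : ℕ) < (π j : ℕ) := h1
  have n2 : (π j : ℕ) < (π k : ℕ) := h2
  have n3 : (π k : ℕ) < (π i : ℕ) := h3
  have na : (i : ℕ) < (j : ℕ) := hij
  have nb : (j : ℕ) < (k : ℕ) := hjk
  have nc : (k : ℕ) < (l : ℕ) := hkl
  have henum : ∀ u : Fin 4, u = 0 ∨ u = 1 ∨ u = 2 ∨ u = 3 := by decide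
  refine ⟨![i, j, k, l], ?_, ?_⟩
  · intro x y hxy
    rcases henum x with hx | hx | hx | hx <;> rcases henum y with hy | hy | hy | hy <;>
      subst hx <;> subst hy <;>
      simp only [Matrix.cons_val_zero, Matrix.cons_val_one, Matrix.head_cons,
        Matrix.cons_val_two, Matrix.tail_cons, Matrix.cons_val_three] <;>
      first
        | exact absurd hxy (by decide)
        | exact Fin.lt_def.mpr (by omega)
  · intro x y
    rcases henum x with hx | hx | hx | hx <;> rcases henum y with hy | hy | hy | hy <;>
      subst hx <;> subst hy <;>
      simp only [Matrix.cons_val_zero, Matrix.cons_val_one, Matrix.head_cons,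
        Matrix.cons_val_two, Matrix.tail_cons, Matrix.cons_val_three] <;>
      (constructor <;> intro h) <;>
      first
        | decide
        | exact absurd h (by decide)
        | exact Fin.lt_def.mpr (by omega)
        | (rw [Fin.lt_def] at h; omega)

lemma extract4231 {n : ℕ} (π : Equiv.Perm (Fin n)) (h : ContainsPattern π pat4231) :
    ∃ i j k l : Fin n, i < j ∧ j < k ∧ k < l ∧
      π l < π j ∧ π j < π k ∧ π k < π i := by
  obtain ⟨f, hf, hv⟩ := h
  exact ⟨f 0, f 1, f 2, f 3, hf (by decide), hf (by decide), hf (by decide),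
    (hv 3 1).mpr (by decide), (hv 1 2).mpr (by decide), (hv 2 0).mpr (by decide)⟩

/-- Let `π` avoid 132 and have exactly three left-to-right minima, at positions
`p₁ < p₂ < p₃` (with values `π p₁ > π p₂ > π p₃`). Then `π` avoids 4231 if and only if
`π p₁ = π p₂ + 1` or `p₃ = p₂ + 1`. -/
theorem avoid_4231_iff_of_three_ltr_minima (n : ℕ) (π : Equiv.Perm (Fin n))
    (h132 : AvoidsPattern π pat132) (p₁ p₂ p₃ : Fin n) (h12 : p₁ < p₂) (h23 : p₂ < p₃)
    (hm1 : IsLtrMin π p₁) (hm2 : IsLtrMin π p₂) (hm3 : IsLtrMin π p₃)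
    (honly : ∀ i : Fin n, IsLtrMin π i → i = p₁ ∨ i = p₂ ∨ i = p₃) :
    AvoidsPattern π pat4231 ↔
      ((π p₁ : ℕ) = (π p₂ : ℕ) + 1 ∨ (p₃ : ℕ) = (p₂ : ℕ) + 1) := by
  have hn : 0 < n := p₁.pos
  have h132' : ∀ a b c : Fin n, a < b → b < c → π a < π c → π c < π b → False :=
    fun a b c hab hbc h1 h2 => h132 (contains132_of π a b c hab hbc h1 h2)
  -- p₁ is the position 0
  have hp1 : p₁ = ⟨0, hn⟩ := by
    have hmin : IsLtrMin π ⟨0, hn⟩ := by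
      intro j hj
      exact absurd (Fin.lt_def.mp hj) (Nat.not_lt_zero _)
    rcases honly _ hmin with h | h | h
    · exact h.symm
    · exfalso
      rw [← h] at h12
      exact absurd (Fin.lt_def.mp h12) (Nat.not_lt_zero _)
    · exfalso
      have := h12.trans h23
      rw [← h] at this
      exact absurd (Fin.lt_def.mp this) (Nat.not_lt_zero _)
  have hp10 : (p₁ : ℕ) = 0 := by rw [hp1]
  have hv12 : π p₂ < π p₁ := hm2 p₁ h12
  have hv23 : π p₃ < π p₂ := hm3 p₂ h23
  have nv12 : (π p₂ : ℕ) < (π p₁ : ℕ) := hv12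
  have nv23 : (π p₃ : ℕ) < (π p₂ : ℕ) := hv23
  have n12 : (p₁ : ℕ) < (p₂ : ℕ) := h12
  have n23 : (p₂ : ℕ) < (p₃ : ℕ) := h23
  -- π p₃ = 0
  have hp3z : (π p₃ : ℕ) = 0 := by
    set z := π.symm ⟨0, hn⟩ with hzdef
    have h0 : π z = ⟨0, hn⟩ := π.apply_symm_apply _
    have h0v : (π z : ℕ) = 0 := by rw [h0]
    have hz : IsLtrMin π z := by
      intro j hj
      have hjv : (π j : ℕ) ≠ 0 := by
        intro he
        have h1 : π j = π z := Fin.ext (by omega)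
        have h2 : j = z := π.injective h1
        rw [h2] at hj
        exact lt_irrefl _ hj
      rw [Fin.lt_def]
      omega
    rcases honly _ hz with h | h | h
    · exfalso
      rw [h] at h0v
      omega
    · exfalso
      rw [h] at h0v
      omega
    · rw [← h]
      exact h0v
  -- prefix minima lemmas
  have A1 : ∀ r : Fin n, r < p₂ → π p₁ ≤ π r := by
    have key : ∀ N : ℕ, ∀ r : Fin n, (r : ℕ) ≤ N → r < p₂ → π p₁ ≤ π r := by
      intro N
      induction N with
      | zero =>
        intro r hr hlt
        have : r = p₁ := Fin.ext (by omega)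
        rw [this]
      | succ N ih =>
        intro r hr hlt
        by_cases hmin : IsLtrMin π r
        · rcases honly r hmin with h | h | h
          · rw [h]
          · rw [h] at hlt; exact absurd hlt (lt_irrefl _)
          · rw [h] at hlt; exact absurd (hlt.trans h23) (lt_irrefl _)
        · unfold IsLtrMin at hmin
          push_neg at hmin
          obtain ⟨s, hs, hsle⟩ := hmin
          have hsN : (s : ℕ) ≤ N := by
            have := Fin.lt_def.mp hs; omega
          exact (ih s hsN (hs.trans hlt)).trans hsle
    intro r hlt
    exact key r r le_rfl hlt
  have A2 : ∀ r : Fin n, r < p₃ → π p₂ ≤ π r := by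
    have key : ∀ N : ℕ, ∀ r : Fin n, (r : ℕ) ≤ N → r < p₃ → π p₂ ≤ π r := by
      intro N
      induction N with
      | zero =>
        intro r hr hlt
        have : r = p₁ := Fin.ext (by omega)
        rw [this]; exact le_of_lt hv12
      | succ N ih =>
        intro r hr hlt
        by_cases hmin : IsLtrMin π r
        · rcases honly r hmin with h | h | h
          · rw [h]; exact le_of_lt hv12
          · rw [h]
          · rw [h] at hlt; exact absurd hlt (lt_irrefl _)
        · unfold IsLtrMin at hmin
          push_neg at hmin
          obtain ⟨s, hs, hsle⟩ := hmin
          have hsN : (s : ℕ) ≤ N := by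
            have := Fin.lt_def.mp hs; omega
          exact (ih s hsN (hs.trans hlt)).trans hsle
    intro r hlt
    exact key r r le_rfl hlt
  constructor
  · -- forward: avoidance implies the condition
    intro havoid
    by_contra hcon
    push_neg at hcon
    obtain ⟨hA, hB⟩ := hcon
    apply havoid
    have hm : (π p₂ : ℕ) + 1 < (π p₁ : ℕ) := by omega
    have hv : (π p₂ : ℕ) + 1 < n := lt_trans hm (π p₁).isLt
    obtain ⟨q, hπq⟩ : ∃ q : Fin n, (π q : ℕ) = (π p₂ : ℕ) + 1 :=
      ⟨π.symm ⟨(π p₂ : ℕ) + 1, hv⟩, by simp⟩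
    have hq2 : p₂ < q := by
      have hne : q ≠ p₂ := by
        intro h
        rw [h] at hπq; omega
      have hnlt : ¬ q < p₂ := by
        intro h
        have : (π p₁ : ℕ) ≤ (π q : ℕ) := A1 q h
        omega
      exact lt_of_le_of_ne (not_lt.mp hnlt) (Ne.symm hne)
    have hq3 : q < p₃ := by
      by_contra hq3
      have hqne : q ≠ p₃ := by
        intro h
        rw [h] at hπq; omega
      have hp3q : p₃ < q := lt_of_le_of_ne (not_lt.mp hq3) (Ne.symm hqne)
      have hrlt : (p₂ : ℕ) + 1 < n := lt_trans (by omega) p₃.isLt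
      set r : Fin n := ⟨(p₂ : ℕ) + 1, hrlt⟩ with hrdef
      have hrv : (r : ℕ) = (p₂ : ℕ) + 1 := rfl
      have hp2r : p₂ < r := Fin.lt_def.mpr (by omega)
      have hr3 : r < p₃ := Fin.lt_def.mpr (by omega)
      have hrq : r < q := hr3.trans hp3q
      have h1 : ¬ π q < π r := by
        intro h
        exact h132' p₂ r q hp2r hrq (Fin.lt_def.mpr (by omega)) h
      have h1' : (π r : ℕ) ≤ (π q : ℕ) := not_lt.mp h1
      have h2 : (π p₂ : ℕ) ≤ (π r : ℕ) := A2 r hr3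
      have h3 : (π r : ℕ) ≠ (π q : ℕ) := by
        intro h
        have : r = q := π.injective (Fin.ext h)
        rw [this] at hrq
        exact lt_irrefl _ hrq
      have h4 : (π r : ℕ) ≠ (π p₂ : ℕ) := by
        intro h
        have : r = p₂ := π.injective (Fin.ext h)
        rw [this] at hp2r
        exact lt_irrefl _ hp2r
      omega
    exact contains4231_of π p₁ p₂ q p₃ h12 hq2 hq3
      hv23 (Fin.lt_def.mpr (by omega)) (Fin.lt_def.mpr (by omega))
  · -- backward: condition implies avoidance
    intro hyp hcont
    obtain ⟨i, j, k, l, hij, hjk, hkl, hlj, hjk', hki⟩ := extract4231 π hcont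
    have nlj : (π l : ℕ) < (π j : ℕ) := hlj
    have njk : (π j : ℕ) < (π k : ℕ) := hjk'
    have nki : (π k : ℕ) < (π i : ℕ) := hki
    have nij : (i : ℕ) < (j : ℕ) := hij
    have njkp : (j : ℕ) < (k : ℕ) := hjk
    have nkl : (k : ℕ) < (l : ℕ) := hkl
    have hlne3 : p₃ < l → (π p₃ : ℕ) < (π l : ℕ) := by
      intro h
      have h' : l ≠ p₃ := fun he => by rw [he] at h; exact lt_irrefl _ h
      have : (π l : ℕ) ≠ (π p₃ : ℕ) := fun he => h' (π.injective (Fin.ext he))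
      omega
    rcases lt_trichotomy ((π j : ℕ)) ((π p₁ : ℕ)) with hc | hc | hc
    · rcases lt_trichotomy ((π j : ℕ)) ((π p₂ : ℕ)) with hd | hd | hd
      · -- π j < m₂ : j must be after p₃
        have hjne3 : j ≠ p₃ := by
          intro h
          have : (π j : ℕ) = (π p₃ : ℕ) := by rw [h]
          omega
        have hnlt : ¬ j < p₃ := by
          intro h
          have : (π p₂ : ℕ) ≤ (π j : ℕ) := A2 j h
          omega
        have hp3j : (p₃ : ℕ) < (j : ℕ) := by
          have h1 : (p₃ : ℕ) ≤ (j : ℕ) := not_lt.mp fun h => hnlt (Fin.lt_def.mpr h)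
          have h2 : (j : ℕ) ≠ (p₃ : ℕ) := fun h => hjne3 (Fin.ext h)
          omega
        have hp3l : p₃ < l := Fin.lt_def.mpr (by omega)
        exact h132' p₃ k l (Fin.lt_def.mpr (by omega)) hkl
          (Fin.lt_def.mpr (by have := hlne3 hp3l; omega))
          (Fin.lt_def.mpr (by omega))
      · -- π j = m₂ : j = p₂
        have hjp2 : j = p₂ := π.injective (Fin.ext hd)
        have hjv : (j : ℕ) = (p₂ : ℕ) := by rw [hjp2]
        rcases hyp with hA | hB
        · -- m₁ = m₂ + 1
          have hkp1 : (k : ℕ) ≠ (p₁ : ℕ) := by omega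
          have hkv : (π k : ℕ) ≠ (π p₁ : ℕ) := fun h =>
            hkp1 (by rw [π.injective (Fin.ext h)])
          have hiv : (π i : ℕ) ≠ (π p₁ : ℕ) := by omega
          have hip1 : (i : ℕ) ≠ (p₁ : ℕ) := fun h => hiv (by rw [Fin.ext h])
          exact h132' p₁ i k (Fin.lt_def.mpr (by omega)) (hij.trans hjk)
            (Fin.lt_def.mpr (by omega)) hki
        · -- p₃ = p₂ + 1
          have hkne3 : k ≠ p₃ := by
            intro h
            have : (π k : ℕ) = (π p₃ : ℕ) := by rw [h]
            omega
          have hkne3' : (k : ℕ) ≠ (p₃ : ℕ) := fun h => hkne3 (Fin.ext h)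
          have hp3k : p₃ < k := Fin.lt_def.mpr (by omega)
          have hp3l : p₃ < l := hp3k.trans hkl
          exact h132' p₃ k l hp3k hkl
            (Fin.lt_def.mpr (by have := hlne3 hp3l; omega))
            (Fin.lt_def.mpr (by omega))
      · -- m₂ < π j < m₁
        rcases hyp with hA | hB
        · omega
        · have hjne2 : (π j : ℕ) ≠ (π p₂ : ℕ) := by omega
          have hjne2' : (j : ℕ) ≠ (p₂ : ℕ) := fun h => hjne2 (by rw [Fin.ext h])
          have hnlt : ¬ j < p₂ := by
            intro h
            have : (π p₁ : ℕ) ≤ (π j : ℕ) := A1 j h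
            omega
          have hp2j : (p₂ : ℕ) ≤ (j : ℕ) := not_lt.mp fun h => hnlt (Fin.lt_def.mpr h)
          have hjne3 : j ≠ p₃ := by
            intro h
            have : (π j : ℕ) = (π p₃ : ℕ) := by rw [h]
            omega
          have hjne3' : (j : ℕ) ≠ (p₃ : ℕ) := fun h => hjne3 (Fin.ext h)
          have hp3l : p₃ < l := Fin.lt_def.mpr (by omega)
          exact h132' p₃ k l (Fin.lt_def.mpr (by omega)) hkl
            (Fin.lt_def.mpr (by have := hlne3 hp3l; omega))
            (Fin.lt_def.mpr (by omega))
    · -- π j = m₁ : impossible since i < j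
      have hjp1 : j = p₁ := π.injective (Fin.ext hc)
      have : (j : ℕ) = (p₁ : ℕ) := by rw [hjp1]
      omega
    · -- m₁ < π j
      have hiv : (π i : ℕ) ≠ (π p₁ : ℕ) := by omega
      have hip1 : (i : ℕ) ≠ (p₁ : ℕ) := fun h => hiv (by rw [Fin.ext h])
      exact h132' p₁ i k (Fin.lt_def.mpr (by omega)) (hij.trans hjk)
        (Fin.lt_def.mpr (by omega)) hki
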